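/- Let φ ∈ ΓL(V)_H, let φ' be the permutation of [V] defined by φ'(⟨x⟩) = σφσ(⟨x⟩) if ⟨x⟩ ∈ [H] and φ'(⟨x⟩) = φ(⟨x⟩) otherwise, and let f be the map sending W ∈ 𝒜 to [σ(W∩H) ∪ (W∖H)] and W ∈ ℬ to [σ(W)]. Then f(φ(W)) = φ'(f(W)) for every W ∈ 𝒜 ∪ ℬ, where φ'(f(W)) denotes the image of the set f(W) ⊆ [V] under φ'. -/

import Mathlib

/-- The set of projective points (1-dimensional subspaces) contained in a subset `S` of `V`. -/
def projPts (K : Type*) {V : Type*} [Field K] [AddCommGroup V] [Module K V]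
    (S : Set V) : Set (Submodule K V) :=
  {P | Module.finrank K P = 1 ∧ (P : Set V) ⊆ S}

/-- `𝒜`: the (e+1)-dimensional subspaces of `V` not contained in `H`. -/
def setA {K V : Type*} [Field K] [AddCommGroup V] [Module K V]
    (e : ℕ) (H : Submodule K V) : Set (Submodule K V) :=
  {W | Module.finrank K W = e + 1 ∧ ¬ W ≤ H}

/-- `ℬ`: the (e-1)-dimensional subspaces of `H`. -/
def setB {K V : Type*} [Field K] [AddCommGroup V] [Module K V]
    (e : ℕ) (H : Submodule K V) : Set (Submodule K V) :=
  {W | Module.finrank K W = e - 1 ∧ W ≤ H}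

/-- The block `[σ(W ∩ H) ∪ (W \ H)]` associated to `W ∈ 𝒜`. -/
def blockA {K V : Type*} [Field K] [AddCommGroup V] [Module K V]
    (σ : Submodule K V → Submodule K V) (H W : Submodule K V) : Set (Submodule K V) :=
  projPts K ((σ (W ⊓ H) : Set V) ∪ ((W : Set V) \ (H : Set V)))

/-- The block `[σ(W)]` associated to `W ∈ ℬ`. -/
def blockB {K V : Type*} [Field K] [AddCommGroup V] [Module K V]
    (σ : Submodule K V → Submodule K V) (W : Submodule K V) : Set (Submodule K V) :=
  projPts K (σ W : Set V)

/-- The block set `𝒜' ∪ ℬ'` of the Jungnickel–Tonchev design. -/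
def blocksJT {K V : Type*} [Field K] [AddCommGroup V] [Module K V]
    (e : ℕ) (σ : Submodule K V → Submodule K V) (H : Submodule K V) :
    Set (Set (Submodule K V)) :=
  (blockA σ H '' setA e H) ∪
    {B | ∃ W : Submodule K V, Module.finrank K W = e + 1 ∧ W ≤ H ∧ B = projPts K (W : Set V)}

/-- The image of a subspace `W` of `V` under a semilinear bijection `φ` of `V`
(an element of the general semilinear group `ΓL(V)`). -/
def semimap {K V : Type*} [Field K] [AddCommGroup V] [Module K V]
    (τ : K ≃+* K) (φ : V ≃+ V)
    (hφ : ∀ (c : K) (x : V), φ (c • x) = τ c • φ x) (W : Submodule K V) :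
    Submodule K V where
  carrier := φ '' (W : Set V)
  add_mem' := by
    rintro _ _ ⟨a, ha, rfl⟩ ⟨b, hb, rfl⟩
    exact ⟨a + b, W.add_mem ha hb, map_add φ a b⟩
  zero_mem' := ⟨0, W.zero_mem, map_zero φ⟩
  smul_mem' := by
    rintro c _ ⟨a, ha, rfl⟩
    exact ⟨τ.symm c • a, W.smul_mem _ ha, by rw [hφ, RingEquiv.apply_symm_apply]⟩

open Classical in
/-- The permutation `φ'` of the projective points of `V` induced by `φ ∈ ΓL(V)_H`:
on points of `H` it acts as `σ φ σ`, elsewhere as `φ`. -/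
noncomputable def phiMap {K V : Type*} [Field K] [AddCommGroup V] [Module K V]
    (σ : Submodule K V → Submodule K V) (H : Submodule K V)
    (τ : K ≃+* K) (φ : V ≃+ V)
    (hφ : ∀ (c : K) (x : V), φ (c • x) = τ c • φ x) (P : Submodule K V) : Submodule K V :=
  if P ≤ H then σ (semimap τ φ hφ (σ P)) else semimap τ φ hφ P

open Classical in
/-- The map `f` sending `W ∈ 𝒜` to `[σ(W ∩ H) ∪ (W \ H)]` and `W ∈ ℬ` to `[σ(W)]`. -/
noncomputable def fJT {K V : Type*} [Field K] [AddCommGroup V] [Module K V]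
    (σ : Submodule K V → Submodule K V) (e : ℕ) (H : Submodule K V)
    (W : Submodule K V) : Set (Submodule K V) :=
  if W ∈ setA e H then blockA σ H W else blockB σ W


section Aux

variable {K V : Type*} [Field K] [AddCommGroup V] [Module K V]

lemma mem_semimap (τ : K ≃+* K) (φ : V ≃+ V)
    (hφ : ∀ (c : K) (x : V), φ (c • x) = τ c • φ x) {W : Submodule K V} {x : V} :
    x ∈ semimap τ φ hφ W ↔ φ.symm x ∈ W := by
  change x ∈ φ '' (W : Set V) ↔ _
  constructor
  · rintro ⟨y, hy, rfl⟩; simpa using hy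
  · intro h; exact ⟨φ.symm x, h, φ.apply_symm_apply x⟩

lemma hphi_symm (τ : K ≃+* K) (φ : V ≃+ V)
    (hφ : ∀ (c : K) (x : V), φ (c • x) = τ c • φ x) :
    ∀ (c : K) (x : V), φ.symm (c • x) = τ.symm c • φ.symm x := by
  intro c x
  apply φ.injective
  rw [φ.apply_symm_apply, hφ, RingEquiv.apply_symm_apply, φ.apply_symm_apply]

lemma semimap_semimap_symm (τ : K ≃+* K) (φ : V ≃+ V)
    (hφ : ∀ (c : K) (x : V), φ (c • x) = τ c • φ x) (W : Submodule K V) :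
    semimap τ φ hφ (semimap τ.symm φ.symm (hphi_symm τ φ hφ) W) = W := by
  ext x
  rw [mem_semimap, mem_semimap]
  simp

lemma semimap_symm_semimap (τ : K ≃+* K) (φ : V ≃+ V)
    (hφ : ∀ (c : K) (x : V), φ (c • x) = τ c • φ x) (W : Submodule K V) :
    semimap τ.symm φ.symm (hphi_symm τ φ hφ) (semimap τ φ hφ W) = W := by
  ext x
  rw [mem_semimap, mem_semimap]
  simp

lemma semimap_le_iff (τ : K ≃+* K) (φ : V ≃+ V)
    (hφ : ∀ (c : K) (x : V), φ (c • x) = τ c • φ x) (W₁ W₂ : Submodule K V) :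
    semimap τ φ hφ W₁ ≤ semimap τ φ hφ W₂ ↔ W₁ ≤ W₂ := by
  constructor
  · intro h x hx
    have h1 : φ x ∈ semimap τ φ hφ W₁ := by rw [mem_semimap]; simpa using hx
    have h2 := h h1
    rw [mem_semimap] at h2
    simpa using h2
  · intro h x hx
    rw [mem_semimap] at hx ⊢
    exact h hx

lemma semimap_inf (τ : K ≃+* K) (φ : V ≃+ V)
    (hφ : ∀ (c : K) (x : V), φ (c • x) = τ c • φ x) (W₁ W₂ : Submodule K V) :
    semimap τ φ hφ (W₁ ⊓ W₂) = semimap τ φ hφ W₁ ⊓ semimap τ φ hφ W₂ := by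
  ext x
  simp [mem_semimap, Submodule.mem_inf]

lemma semimap_finrank [Fintype K] [FiniteDimensional K V] (τ : K ≃+* K) (φ : V ≃+ V)
    (hφ : ∀ (c : K) (x : V), φ (c • x) = τ c • φ x) (W : Submodule K V) :
    Module.finrank K (semimap τ φ hφ W) = Module.finrank K W := by
  have hfin : Finite V := Module.finite_of_finite K
  have hc : Nat.card (semimap τ φ hφ W) = Nat.card W :=
    Nat.card_congr (Equiv.Set.image (⇑φ) (W : Set V) φ.injective).symm
  have hcard : ∀ M : Submodule K V, Nat.card M = Fintype.card K ^ Module.finrank K M := by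
    intro M
    have : Fintype V := Fintype.ofFinite V
    have : Fintype M := Fintype.ofFinite _
    rw [Nat.card_eq_fintype_card]
    exact Module.card_eq_pow_finrank (K := K)
  rw [hcard, hcard] at hc
  exact Nat.pow_right_injective Fintype.one_lt_card hc

lemma point_eq_span [FiniteDimensional K V] {P : Submodule K V}
    (hP : Module.finrank K P = 1) {x : V} (hx : x ∈ P) (hx0 : x ≠ 0) :
    P = Submodule.span K {x} := by
  have h1 : Submodule.span K {x} ≤ P := by
    rw [Submodule.span_le]; simpa using hx
  refine (Submodule.eq_of_le_of_finrank_le h1 ?_).symm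
  rw [hP, finrank_span_singleton hx0]

lemma mem_zero_of_not_le [FiniteDimensional K V] {P H : Submodule K V}
    (hP : Module.finrank K P = 1) (hPH : ¬ P ≤ H) {x : V}
    (hx : x ∈ P) (hxH : x ∈ H) : x = 0 := by
  by_contra h0
  refine hPH ?_
  rw [point_eq_span hP hx h0, Submodule.span_le]
  simpa using hxH

lemma sigma_dual {σ : Submodule K V → Submodule K V} {H : Submodule K V}
    (hσle : ∀ W ≤ H, σ W ≤ H) (hσinv : ∀ W ≤ H, σ (σ W) = W)
    (hσanti : ∀ W₁ W₂ : Submodule K V, W₁ ≤ H → W₂ ≤ H → W₁ ≤ W₂ → σ W₂ ≤ σ W₁)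
    (P M : Submodule K V) (hP : P ≤ H) (hM : M ≤ H) : P ≤ σ M ↔ M ≤ σ P := by
  constructor
  · intro h
    have := hσanti P (σ M) hP (hσle M hM) h
    rwa [hσinv M hM] at this
  · intro h
    have := hσanti M (σ P) hM (hσle P hP) h
    rwa [hσinv P hP] at this

lemma mem_blockA_iff [FiniteDimensional K V] {σ : Submodule K V → Submodule K V}
    {H W P : Submodule K V} (hσle : ∀ U ≤ H, σ U ≤ H) :
    P ∈ blockA σ H W ↔
      Module.finrank K P = 1 ∧ (P ≤ σ (W ⊓ H) ∨ (P ≤ W ∧ ¬ P ≤ H)) := by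
  show (Module.finrank K P = 1 ∧
      (P : Set V) ⊆ (σ (W ⊓ H) : Set V) ∪ ((W : Set V) \ (H : Set V))) ↔ _
  constructor
  · rintro ⟨h1, hsub⟩
    refine ⟨h1, ?_⟩
    by_cases hPH : P ≤ H
    · left
      intro x hx
      rcases hsub hx with h | h
      · exact h
      · exact absurd (hPH hx) h.2
    · right
      refine ⟨fun x hx => ?_, hPH⟩
      rcases hsub hx with h | h
      · have hxH : x ∈ H := hσle _ inf_le_right h
        have hx0 : x = 0 := mem_zero_of_not_le h1 hPH hx hxH
        rw [hx0]; exact W.zero_mem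
      · exact h.1
  · rintro ⟨h1, h2 | h2⟩
    · exact ⟨h1, fun x hx => Or.inl (h2 hx)⟩
    · refine ⟨h1, fun x hx => ?_⟩
      by_cases hxH : x ∈ H
      · have hx0 : x = 0 := mem_zero_of_not_le h1 h2.2 hx hxH
        left
        rw [hx0]
        exact (σ (W ⊓ H)).zero_mem
      · exact Or.inr ⟨h2.1 hx, hxH⟩

lemma mem_blockB_iff {σ : Submodule K V → Submodule K V} {W P : Submodule K V} :
    P ∈ blockB σ W ↔ Module.finrank K P = 1 ∧ P ≤ σ W := by
  show (Module.finrank K P = 1 ∧ (P : Set V) ⊆ (σ W : Set V)) ↔ _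
  rw [SetLike.coe_subset_coe]

end Aux

/-- For `φ ∈ ΓL(V)_H` with induced point permutation `φ'` and the block
map `f`, one has `f(φ(W)) = φ'(f(W))` for every `W ∈ 𝒜 ∪ ℬ`, where `φ'(f(W))` is the image
of the point set `f(W)` under `φ'`. -/
theorem stmt10 (q e : ℕ) (hq : ∃ p n : ℕ, p.Prime ∧ 0 < n ∧ q = p ^ n) (he : 2 ≤ e)
    (K V : Type*) [Field K] [Fintype K] (hK : Fintype.card K = q)
    [AddCommGroup V] [Module K V] [FiniteDimensional K V]
    (hV : Module.finrank K V = 2 * e + 1)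
    (H : Submodule K V) (hH : Module.finrank K ↥H = 2 * e)
    (σ : Submodule K V → Submodule K V)
    (hσle : ∀ W ≤ H, σ W ≤ H)
    (hσinv : ∀ W ≤ H, σ (σ W) = W)
    (hσanti : ∀ W₁ W₂ : Submodule K V, W₁ ≤ H → W₂ ≤ H → W₁ ≤ W₂ → σ W₂ ≤ σ W₁)
    (hσinf : ∀ W₁ W₂ : Submodule K V, W₁ ≤ H → W₂ ≤ H → σ W₁ ⊓ σ W₂ = σ (W₁ ⊔ W₂))
    (hσrank : ∀ W ≤ H, Module.finrank K ↥(σ W) = 2 * e - Module.finrank K ↥W)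
    (τ : K ≃+* K) (φ : V ≃+ V) (hφ : ∀ (c : K) (x : V), φ (c • x) = τ c • φ x)
    (hφH : semimap τ φ hφ H = H) :
    ∀ W ∈ setA e H ∪ setB e H,
      fJT σ e H (semimap τ φ hφ W) = phiMap σ H τ φ hφ '' fJT σ e H W := by
  intro W hW
  have hcan1 : ∀ A, semimap τ φ hφ (semimap τ.symm φ.symm (hphi_symm τ φ hφ) A) = A :=
    semimap_semimap_symm τ φ hφ
  have hle : ∀ A B, semimap τ φ hφ A ≤ semimap τ φ hφ B ↔ A ≤ B := semimap_le_iff τ φ hφ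
  have hrk : ∀ A, Module.finrank K (semimap τ φ hφ A) = Module.finrank K A :=
    semimap_finrank τ φ hφ
  have hrk2 : ∀ A, Module.finrank K (semimap τ.symm φ.symm (hphi_symm τ φ hφ) A)
      = Module.finrank K A := semimap_finrank τ.symm φ.symm (hphi_symm τ φ hφ)
  have hleH : ∀ A, semimap τ φ hφ A ≤ H ↔ A ≤ H := by
    intro A
    conv_lhs => rw [show H = semimap τ φ hφ H from hφH.symm]
    exact hle A H
  have hleH2 : ∀ A, semimap τ.symm φ.symm (hphi_symm τ φ hφ) A ≤ H ↔ A ≤ H := by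
    intro A
    rw [← hleH (semimap τ.symm φ.symm (hphi_symm τ φ hφ) A), hcan1]
  have hinfH : ∀ A, semimap τ φ hφ (A ⊓ H) = semimap τ φ hφ A ⊓ H := by
    intro A
    rw [show semimap τ φ hφ (A ⊓ H) = semimap τ φ hφ A ⊓ semimap τ φ hφ H from
      semimap_inf τ φ hφ A H, hφH]
  have dual : ∀ P M : Submodule K V, P ≤ H → M ≤ H → (P ≤ σ M ↔ M ≤ σ P) :=
    sigma_dual hσle hσinv hσanti
  simp only [Set.mem_union] at hW
  rcases hW with hA | hB
  · -- W ∈ setA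
    obtain ⟨hrkW, hWH⟩ := hA
    have hA0 : W ∈ setA e H := ⟨hrkW, hWH⟩
    have hA1 : semimap τ φ hφ W ∈ setA e H :=
      ⟨by rw [hrk]; exact hrkW, fun h => hWH ((hleH W).mp h)⟩
    simp only [fJT, if_pos hA1, if_pos hA0]
    ext P
    simp only [Set.mem_image]
    rw [mem_blockA_iff hσle]
    constructor
    · rintro ⟨hP1, hPle | ⟨hPW, hPH⟩⟩
      · have hPH : P ≤ H := le_trans hPle (hσle _ inf_le_right)
        have hσPle : σ P ≤ H := hσle P hPH
        have h1 : semimap τ.symm φ.symm (hphi_symm τ φ hφ) (σ P) ≤ H := (hleH2 _).mpr hσPle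
        refine ⟨σ (semimap τ.symm φ.symm (hphi_symm τ φ hφ) (σ P)), ?_, ?_⟩
        · rw [mem_blockA_iff hσle]
          refine ⟨?_, Or.inl ?_⟩
          · rw [hσrank _ h1, hrk2, hσrank P hPH, hP1]; omega
          · rw [dual _ _ (hσle _ h1) inf_le_right, hσinv _ h1]
            have h2 : semimap τ φ hφ W ⊓ H ≤ σ P := (dual _ _ hPH inf_le_right).mp hPle
            refine (hle _ _).mp ?_
            rw [hcan1, hinfH]
            exact h2
        · simp only [phiMap]
          rw [if_pos (hσle _ h1), hσinv _ h1, hcan1, hσinv P hPH]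
      · have hPH2 : ¬ semimap τ.symm φ.symm (hphi_symm τ φ hφ) P ≤ H :=
          fun h => hPH (by rw [← hcan1 P]; exact (hleH _).mpr h)
        refine ⟨semimap τ.symm φ.symm (hphi_symm τ φ hφ) P, ?_, ?_⟩
        · rw [mem_blockA_iff hσle]
          refine ⟨by rw [hrk2]; exact hP1, Or.inr ⟨?_, hPH2⟩⟩
          rw [← hle, hcan1]
          exact hPW
        · simp only [phiMap]
          rw [if_neg hPH2, hcan1]
    · rintro ⟨Q, hQmem, rfl⟩
      rw [mem_blockA_iff hσle] at hQmem
      obtain ⟨hQ1, hQle | ⟨hQW, hQH⟩⟩ := hQmem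
      · have hQH : Q ≤ H := le_trans hQle (hσle _ inf_le_right)
        have hσQH : σ Q ≤ H := hσle Q hQH
        have hmQH : semimap τ φ hφ (σ Q) ≤ H := (hleH _).mpr hσQH
        rw [phiMap]
        rw [if_pos hQH]
        refine ⟨?_, Or.inl ?_⟩
        · rw [hσrank _ hmQH, hrk, hσrank Q hQH, hQ1]; omega
        · rw [dual _ _ (hσle _ hmQH) inf_le_right, hσinv _ hmQH, ← hinfH, hle]
          exact (dual _ _ hQH inf_le_right).mp hQle
      · rw [phiMap]
        rw [if_neg hQH]
        exact ⟨by rw [hrk]; exact hQ1,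
          Or.inr ⟨(hle _ _).mpr hQW, fun h => hQH ((hleH _).mp h)⟩⟩
  · -- W ∈ setB
    obtain ⟨hrkW, hWle⟩ := hB
    have hWle2 : semimap τ φ hφ W ≤ H := (hleH W).mpr hWle
    have hnA : W ∉ setA e H := fun h => h.2 hWle
    have hnA2 : semimap τ φ hφ W ∉ setA e H := fun h => h.2 hWle2
    simp only [fJT, if_neg hnA2, if_neg hnA]
    ext P
    simp only [Set.mem_image]
    rw [mem_blockB_iff]
    constructor
    · rintro ⟨hP1, hPle⟩
      have hPH : P ≤ H := le_trans hPle (hσle _ hWle2)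
      have hσPH : σ P ≤ H := hσle P hPH
      have h1 : semimap τ.symm φ.symm (hphi_symm τ φ hφ) (σ P) ≤ H := (hleH2 _).mpr hσPH
      refine ⟨σ (semimap τ.symm φ.symm (hphi_symm τ φ hφ) (σ P)), ?_, ?_⟩
      · rw [mem_blockB_iff]
        refine ⟨?_, ?_⟩
        · rw [hσrank _ h1, hrk2, hσrank P hPH, hP1]; omega
        · rw [dual _ _ (hσle _ h1) hWle, hσinv _ h1]
          have h2 : semimap τ φ hφ W ≤ σ P := (dual _ _ hPH hWle2).mp hPle
          refine (hle _ _).mp ?_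
          rw [hcan1]
          exact h2
      · simp only [phiMap]
        rw [if_pos (hσle _ h1), hσinv _ h1, hcan1, hσinv P hPH]
    · rintro ⟨Q, hQmem, rfl⟩
      rw [mem_blockB_iff] at hQmem
      obtain ⟨hQ1, hQle⟩ := hQmem
      have hQH : Q ≤ H := le_trans hQle (hσle _ hWle)
      have hmQH : semimap τ φ hφ (σ Q) ≤ H := (hleH _).mpr (hσle Q hQH)
      rw [phiMap]
      rw [if_pos hQH]
      refine ⟨?_, ?_⟩
      · rw [hσrank _ hmQH, hrk, hσrank Q hQH, hQ1]; omega
      · rw [dual _ _ (hσle _ hmQH) hWle2, hσinv _ hmQH]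
        exact (hle _ _).mpr ((dual _ _ hQH hWle).mp hQle)
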